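/- Let X be a complex Banach space, let φ : X →L[ℂ] X satisfy ‖φ‖ ≤ 1, and let β₁, β₂ be real with 0 < β₁ ≤ 1 and 0 < β₂ ≤ 1. Then H_{β₁·β₂}(φ) = H_{β₁}(H_{β₂}(φ)); here H_{β₁} may be applied to H_{β₂}(φ) because ‖H_{β₂}(φ)‖ ≤ 1. -/

import Mathlib

set_option maxHeartbeats 1000000

/-- For a continuous linear operator `φ` on a complex Banach space and `0 < β ≤ 1`,
`Hmap β φ = ∑' k, β(1-β)^k • φ^(k+1)`. -/
noncomputable def Hmap {X : Type*} [NormedAddCommGroup X] [NormedSpace ℂ X]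
    (β : ℝ) (φ : X →L[ℂ] X) : X →L[ℂ] X :=
  ∑' k : ℕ, (β * (1 - β) ^ k) • φ ^ (k + 1)

section aux
variable {X : Type*} [NormedAddCommGroup X] [NormedSpace ℂ X] [CompleteSpace X]

lemma Hmap_norm_lt {β : ℝ} (φ : X →L[ℂ] X) (hφ : ‖φ‖ ≤ 1) (h0 : 0 < β) (h1 : β ≤ 1) :
    ‖(1 - β) • φ‖ < 1 := by
  calc ‖(1 - β) • φ‖ ≤ ‖(1 - β : ℝ)‖ * ‖φ‖ := ContinuousLinearMap.opNorm_smul_le _ _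
    _ = (1 - β) * ‖φ‖ := by rw [Real.norm_eq_abs, abs_of_nonneg (by linarith)]
    _ ≤ (1 - β) * 1 := mul_le_mul_of_nonneg_left hφ (by linarith)
    _ < 1 := by linarith

lemma Hmap_eq_formula {β : ℝ} (φ : X →L[ℂ] X) (hφ : ‖φ‖ ≤ 1) (h0 : 0 < β) (h1 : β ≤ 1) :
    Hmap β φ = (β • φ) * ↑(Units.oneSub ((1 - β) • φ) (Hmap_norm_lt φ hφ h0 h1))⁻¹ := by
  have ht := Hmap_norm_lt φ hφ h0 h1
  have hs : Summable fun k : ℕ => ((1 - β) • φ) ^ k := summable_geometric_of_norm_lt_one ht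
  have : ↑(Units.oneSub ((1 - β) • φ) ht)⁻¹ = ∑' k : ℕ, ((1 - β) • φ) ^ k := rfl
  rw [this, smul_mul_assoc, ← hs.tsum_mul_left φ, ← Summable.tsum_const_smul β (hs.mul_left φ)]
  unfold Hmap
  congr 1
  ext k
  rw [smul_pow, mul_smul_comm, ← pow_succ', mul_smul]

lemma Hmap_norm_le {β : ℝ} (φ : X →L[ℂ] X) (hφ : ‖φ‖ ≤ 1) (h0 : 0 < β) (h1 : β ≤ 1) :
    ‖Hmap β φ‖ ≤ 1 := by
  have hb0 : 0 ≤ 1 - β := by linarith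
  have hb1 : 1 - β < 1 := by linarith
  have hsum : Summable fun k : ℕ => β * (1 - β) ^ k :=
    (summable_geometric_of_lt_one hb0 hb1).mul_left β
  have hcn : ∀ k : ℕ, 0 ≤ β * (1 - β) ^ k := fun k =>
    mul_nonneg h0.le (pow_nonneg hb0 k)
  have hbound : ∀ k : ℕ, ‖(β * (1 - β) ^ k) • φ ^ (k + 1)‖ ≤ β * (1 - β) ^ k := by
    intro k
    have h1' : ‖φ ^ (k + 1)‖ ≤ 1 := by
      calc ‖φ ^ (k + 1)‖ ≤ ‖φ‖ ^ (k + 1) := norm_pow_le' φ k.succ_pos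
        _ ≤ 1 := pow_le_one₀ (norm_nonneg _) hφ
    calc ‖(β * (1 - β) ^ k) • φ ^ (k + 1)‖
        ≤ ‖(β * (1 - β) ^ k : ℝ)‖ * ‖φ ^ (k + 1)‖ := ContinuousLinearMap.opNorm_smul_le _ _
      _ = (β * (1 - β) ^ k) * ‖φ ^ (k + 1)‖ := by
          rw [Real.norm_eq_abs, abs_of_nonneg (hcn k)]
      _ ≤ (β * (1 - β) ^ k) * 1 := mul_le_mul_of_nonneg_left h1' (hcn k)
      _ = β * (1 - β) ^ k := mul_one _
  have hsn : Summable fun k : ℕ => ‖(β * (1 - β) ^ k) • φ ^ (k + 1)‖ :=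
    Summable.of_nonneg_of_le (fun k => norm_nonneg _) hbound hsum
  calc ‖Hmap β φ‖ ≤ ∑' k : ℕ, ‖(β * (1 - β) ^ k) • φ ^ (k + 1)‖ :=
        norm_tsum_le_tsum_norm hsn
    _ ≤ ∑' k : ℕ, β * (1 - β) ^ k := Summable.tsum_le_tsum hbound hsn hsum
    _ = β * (1 - (1 - β))⁻¹ := by
        rw [tsum_mul_left, tsum_geometric_of_lt_one hb0 hb1]
    _ = 1 := by rw [sub_sub_cancel, mul_inv_cancel₀ h0.ne']

end aux

/-- The semigroup property `H_{β₁·β₂} = H_{β₁} ∘ H_{β₂}` of the resolvent re-expansion maps;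
`H_{β₁}` may be applied to `H_{β₂}(φ)` since `‖H_{β₂}(φ)‖ ≤ 1`. -/
theorem Hmap_mul
    {X : Type*} [NormedAddCommGroup X] [NormedSpace ℂ X] [CompleteSpace X]
    (φ : X →L[ℂ] X) (hφ : ‖φ‖ ≤ 1)
    (β₁ β₂ : ℝ) (hβ₁0 : 0 < β₁) (hβ₁1 : β₁ ≤ 1) (hβ₂0 : 0 < β₂) (hβ₂1 : β₂ ≤ 1) :
    ‖Hmap β₂ φ‖ ≤ 1 ∧ Hmap (β₁ * β₂) φ = Hmap β₁ (Hmap β₂ φ) := by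
  have hψ : ‖Hmap β₂ φ‖ ≤ 1 := Hmap_norm_le φ hφ hβ₂0 hβ₂1
  refine ⟨hψ, ?_⟩
  have hβ0 : 0 < β₁ * β₂ := mul_pos hβ₁0 hβ₂0
  have hβ1 : β₁ * β₂ ≤ 1 := by nlinarith
  set ψ := Hmap β₂ φ with hψdef
  have ha := Hmap_norm_lt φ hφ hβ₂0 hβ₂1
  have hb := Hmap_norm_lt φ hφ hβ0 hβ1
  have hc := Hmap_norm_lt ψ hψ hβ₁0 hβ₁1
  set ua := Units.oneSub ((1 - β₂) • φ) ha with hua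
  set ub := Units.oneSub ((1 - β₁ * β₂) • φ) hb with hub
  set uc := Units.oneSub ((1 - β₁) • ψ) hc with huc
  have hψf : ψ = (β₂ • φ) * ↑ua⁻¹ := Hmap_eq_formula φ hφ hβ₂0 hβ₂1
  have hψa : ψ * ↑ua = β₂ • φ := by
    rw [hψf, mul_assoc, Units.inv_mul, mul_one]
  have key : (uc : X →L[ℂ] X) * ↑ua = ↑ub := by
    have h1 : (uc : X →L[ℂ] X) = 1 - (1 - β₁) • ψ := rfl
    have h2 : (ua : X →L[ℂ] X) = 1 - (1 - β₂) • φ := rfl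
    have h3 : (ub : X →L[ℂ] X) = 1 - (1 - β₁ * β₂) • φ := rfl
    rw [h1, sub_mul, one_mul, smul_mul_assoc, hψa, smul_smul, h2, h3, sub_sub, ← add_smul]
    congr 2
    ring
  have key2 : uc = ub * ua⁻¹ := by
    apply Units.ext
    rw [Units.val_mul, ← key, mul_assoc, Units.mul_inv, mul_one]
  have step : (β₁ • ψ) * ↑uc⁻¹ = ((β₁ * β₂) • φ) * ↑ub⁻¹ := by
    rw [key2, mul_inv_rev, inv_inv, Units.val_mul, hψf]
    simp only [smul_mul_assoc, smul_smul]
    congr 1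
    rw [mul_assoc, ← mul_assoc (↑ua⁻¹ : X →L[ℂ] X), Units.inv_mul, one_mul]
  calc Hmap (β₁ * β₂) φ = ((β₁ * β₂) • φ) * ↑ub⁻¹ := Hmap_eq_formula φ hφ hβ0 hβ1
    _ = (β₁ • ψ) * ↑uc⁻¹ := step.symm
    _ = Hmap β₁ ψ := (Hmap_eq_formula ψ hψ hβ₁0 hβ₁1).symm
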